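/- If r - λ(r) is a unit in R, then setting t = r + λ(r) and n = λ(r)·r (both in S), one has r² - t·r + n = 0 and t² - 4n = (r - λ(r))² is a unit of S; consequently R is isomorphic as an S-algebra to S[X]/(X² - t·X + n), a polynomial quotient with invertible discriminant. -/

import Mathlib

open Polynomial in
/-- If `r - λ r` is a unit, then with `t = r + λ r` and `n = λ(r)·r` (both in the fixed
subring `S`) one has `r² - t r + n = 0`, `t² - 4n = (r - λ r)²` is a unit of `S`, and
`R ≅ S[X]/(X² - tX + n)` as `S`-algebras. -/
theorem stmt3 {R : Type*} [CommRing R] (l : R →+* R) (hl : ∀ x, l (l x) = x)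
    (r : R) (h : IsUnit (r - l r))
    (S : Subring R) (hS : ∀ x, x ∈ S ↔ l x = x)
    (t n : S) (ht : (t : R) = r + l r) (hn : (n : R) = l r * r) :
    r ^ 2 - (t : R) * r + (n : R) = 0 ∧
    ((t : R)) ^ 2 - 4 * (n : R) = (r - l r) ^ 2 ∧
    IsUnit (t ^ 2 - 4 * n) ∧
    Nonempty ((Polynomial S ⧸ Ideal.span {(X : Polynomial S) ^ 2 - C t * X + C n}) ≃ₐ[S] R) := by
  obtain ⟨w, hw⟩ := h
  have hlw : l ↑w = -↑w := by rw [hw, map_sub, hl]; ring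
  have hwinv : (w : R) * ↑w⁻¹ = 1 := w.mul_inv
  have hlwinv : l ↑w⁻¹ = -↑w⁻¹ := by
    have h1 : l ↑w * l ↑w⁻¹ = 1 := by rw [← map_mul, hwinv, map_one]
    rw [hlw] at h1
    calc l ↑w⁻¹ = (↑w * ↑w⁻¹) * l ↑w⁻¹ := by rw [hwinv, one_mul]
      _ = -(↑w⁻¹ * ((-↑w) * l ↑w⁻¹)) := by ring
      _ = -↑w⁻¹ := by rw [h1, mul_one]
  have part1 : r ^ 2 - (t : R) * r + (n : R) = 0 := by rw [ht, hn]; ring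
  have part2 : ((t : R)) ^ 2 - 4 * (n : R) = (r - l r) ^ 2 := by rw [ht, hn]; ring
  have hdS : ((t ^ 2 - 4 * n : S) : R) = (↑w) ^ 2 := by
    have h4 : ((t ^ 2 - 4 * n : S) : R) = (t : R) ^ 2 - 4 * (n : R) := by
      have e : (t ^ 2 - 4 * n : S) = t * t - (n + n + n + n) := by ring
      rw [e]
      push_cast
      ring
    rw [h4, part2, hw]
  have hinvmem : ((↑w⁻¹ : R) ^ 2) ∈ S := by
    rw [hS, map_pow, hlwinv]; ring
  have part3 : IsUnit (t ^ 2 - 4 * n) := by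
    refine IsUnit.of_mul_eq_one (a := t ^ 2 - 4 * n) ⟨(↑w⁻¹ : R) ^ 2, hinvmem⟩ (Subtype.ext ?_)
    push_cast [hdS]
    rw [← mul_pow, hwinv, one_pow]
  refine ⟨part1, part2, part3, ?_⟩
  set f : Polynomial S := (X : Polynomial S) ^ 2 - C t * X + C n with hf
  have hf' : f = X ^ 2 + (-(C t) * X + C n) := by rw [hf]; ring
  have hdeglow : (-(C t) * X + C n : Polynomial S).degree ≤ 1 := by
    compute_degree
  have hfmonic : f.Monic := by
    rw [hf']
    exact Polynomial.monic_X_pow_add (lt_of_le_of_lt hdeglow (by norm_num))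
  have hfr : aeval r f = 0 := by
    rw [hf]
    simp only [map_add, map_sub, map_mul, map_pow, aeval_X, aeval_C]
    exact part1
  have hsurj : Function.Surjective (aeval r : Polynomial S →ₐ[S] R) := by
    intro x
    set q : R := ↑w⁻¹ * (x - l x) with hq
    have hqS : q ∈ S := by
      rw [hS, hq, map_mul, map_sub, hlwinv, hl]
      ring
    have hlq : l q = q := (hS q).mp hqS
    set p : R := x - q * r with hp
    have key : q * (r - l r) = x - l x := by
      rw [hq, ← hw]
      linear_combination (x - l x) * hwinv
    have hpS : p ∈ S := by
      rw [hS, hp, map_sub, map_mul, hlq]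
      linear_combination key
    refine ⟨C ⟨p, hpS⟩ + C ⟨q, hqS⟩ * X, ?_⟩
    simp only [map_add, map_mul, aeval_C, aeval_X]
    show p + q * r = x
    rw [hp]; ring
  have hker : RingHom.ker (aeval r : Polynomial S →ₐ[S] R) = Ideal.span {f} := by
    ext p
    simp only [RingHom.mem_ker]
    constructor
    · intro hp
      have hdvd : p = p %ₘ f + f * (p /ₘ f) := (p.modByMonic_add_div f).symm
      have hdeg : (p %ₘ f).degree ≤ 1 := by
        rcases subsingleton_or_nontrivial S with hss | hnt
        · have : p %ₘ f = 0 := Subsingleton.elim _ _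
          rw [this, Polynomial.degree_zero]
          exact bot_le
        · have hd2 : f.degree = 2 := by
            have h1 : ((-C t * X + C n : Polynomial S)).degree
                < (X ^ 2 : Polynomial S).degree := by
              rw [Polynomial.degree_X_pow]
              exact lt_of_le_of_lt hdeglow (by norm_num)
            rw [hf', Polynomial.degree_add_eq_left_of_degree_lt h1,
              Polynomial.degree_X_pow]
            norm_num
          have := Polynomial.degree_modByMonic_lt p hfmonic
          rw [hd2] at this
          exact Order.le_of_lt_succ (by exact_mod_cast this)
      have hrem : p %ₘ f = C ((p %ₘ f).coeff 1) * X + C ((p %ₘ f).coeff 0) :=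
        Polynomial.eq_X_add_C_of_degree_le_one hdeg
      set a : S := (p %ₘ f).coeff 1
      set b : S := (p %ₘ f).coeff 0
      have heval : (a : R) * r + (b : R) = 0 := by
        have h0 : aeval r (p %ₘ f) = 0 := by
          have h1 := congrArg (aeval r) hdvd
          rw [map_add, map_mul, hfr, zero_mul, add_zero, hp] at h1
          exact h1.symm
        rw [hrem] at h0
        simp at h0
        exact h0
      have haS : l (a : R) = (a : R) := (hS _).mp a.2
      have hbS : l (b : R) = (b : R) := (hS _).mp b.2
      have heval2 : (a : R) * l r + (b : R) = 0 := by
        have h2 := congrArg l heval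
        rw [map_add, map_mul, haS, hbS, map_zero] at h2
        exact h2
      have ha0 : (a : R) = 0 := by
        have hsub : (a : R) * (r - l r) = 0 := by linear_combination heval - heval2
        calc (a : R) = (a : R) * ((r - l r) * ↑w⁻¹) := by rw [← hw, hwinv, mul_one]
          _ = ((a : R) * (r - l r)) * ↑w⁻¹ := by ring
          _ = 0 := by rw [hsub, zero_mul]
      have hb0 : (b : R) = 0 := by linear_combination heval - r * ha0
      have hrem0 : p %ₘ f = 0 := by
        have ha : a = 0 := by exact_mod_cast ha0
        have hb : b = 0 := by exact_mod_cast hb0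
        rw [hrem, ha, hb]; simp
      rw [hdvd, hrem0, zero_add]
      exact Ideal.mem_span_singleton.mpr ⟨_, rfl⟩
    · intro hp
      obtain ⟨c, rfl⟩ := Ideal.mem_span_singleton.mp hp
      rw [map_mul, hfr, zero_mul]
  exact ⟨(Ideal.quotientEquivAlgOfEq S hker.symm).trans
    (Ideal.quotientKerAlgEquivOfSurjective hsurj)⟩
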